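/- Let Ω ⊆ ℝⁿ be bounded with boundary of fractal dimension at most n − δ (δ > 0), let r > 0, and let P ⊆ ℝⁿ be a set of points such that every ball of radius r contains at most K points of P, and let T : P → ℝ be bounded by M. Then the sum of |T(a)| over points a ∈ P whose distance to ∂(λΩ) is less than r is at most c₀ K M λ^{n−δ} for some constant c₀ independent of λ ≥ 1; in particular this sum divided by Vol(λΩ) tends to 0 as λ → ∞. -/

import Mathlib

open MeasureTheory Filter
open scoped Pointwise

/-- The contribution of points near the boundary of λΩ is negligible: if ∂Ω has fractal
dimension ≤ n − δ, each r-ball contains at most K points of P, and |T| ≤ M on P, then the sum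
of |T| over points of P at distance < r from ∂(λΩ) is at most c₀ K M λ^{n−δ}, and divided by
Vol(λΩ) it tends to 0. -/
theorem boundary_contribution_negligible (n : ℕ) (δ : ℝ) (hδ : 0 < δ)
    (Ω : Set (Fin n → ℝ)) (hΩb : Bornology.IsBounded Ω) (hΩm : MeasurableSet Ω)
    (hΩv : 0 < volume Ω)
    (c ε₀ : ℝ) (hc : 0 < c) (hε₀ : 0 < ε₀)
    (hfr : ∀ ε : ℝ, 0 < ε → ε < ε₀ →
      ∃ F : Finset (Fin n → ℝ), (F.card : ℝ) ≤ c * ε ^ (-((n : ℝ) - δ)) ∧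
        frontier Ω ⊆ ⋃ q ∈ F, Metric.ball q ε)
    (r : ℝ) (hr : 0 < r) (P : Set (Fin n → ℝ))
    (hPfin : ∀ x, (P ∩ Metric.ball x r).Finite)
    (K : ℕ) (hK : ∀ x, (P ∩ Metric.ball x r).ncard ≤ K)
    (T : (Fin n → ℝ) → ℝ) (M : ℝ) (hM : ∀ a ∈ P, |T a| ≤ M) :
    (∃ c₀ : ℝ, ∀ lam : ℝ, 1 ≤ lam →
      {a : Fin n → ℝ | a ∈ P ∧ ∃ b ∈ frontier (lam • Ω), dist a b < r}.Finite ∧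
        (∑' a : {a : Fin n → ℝ | a ∈ P ∧ ∃ b ∈ frontier (lam • Ω), dist a b < r},
            |T (a : Fin n → ℝ)|) ≤ c₀ * K * M * lam ^ ((n : ℝ) - δ)) ∧
      Tendsto (fun lam : ℝ =>
          (∑' a : {a : Fin n → ℝ | a ∈ P ∧ ∃ b ∈ frontier (lam • Ω), dist a b < r},
              |T (a : Fin n → ℝ)|) / (volume (lam • Ω)).toReal)
        atTop (nhds 0) := by
  classical
  rcases Set.eq_empty_or_nonempty P with hP | hP
  · -- trivial case : P is empty
    have hSempty : ∀ lam : ℝ,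
        {a : Fin n → ℝ | a ∈ P ∧ ∃ b ∈ frontier (lam • Ω), dist a b < r} = (∅ : Set _) := by
      intro lam
      ext a
      simp [hP]
    constructor
    · refine ⟨0, fun lam hlam => ?_⟩
      rw [hSempty lam]
      refine ⟨Set.finite_empty, ?_⟩
      rw [tsum_empty]
      simp
    · have : (fun lam : ℝ =>
          (∑' a : {a : Fin n → ℝ | a ∈ P ∧ ∃ b ∈ frontier (lam • Ω), dist a b < r},
              |T (a : Fin n → ℝ)|) / (volume (lam • Ω)).toReal) = fun _ => (0 : ℝ) := by
        funext lam
        rw [hSempty lam, tsum_empty, zero_div]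
      rw [this]
      exact tendsto_const_nhds
  -- main case : P nonempty, hence M ≥ 0
  obtain ⟨x₀, hx₀⟩ := hP
  have hM0 : 0 ≤ M := le_trans (abs_nonneg _) (hM x₀ hx₀)
  -- a finite cover of the closed ball of radius 2r by balls of radius r
  obtain ⟨s, hs⟩ : ∃ s : Finset (Fin n → ℝ),
      Metric.closedBall (0 : Fin n → ℝ) (2 * r) ⊆ ⋃ y ∈ s, Metric.ball y r := by
    have hcpt := isCompact_closedBall (0 : Fin n → ℝ) (2 * r)
    exact hcpt.elim_finite_subcover (fun y : Fin n → ℝ => Metric.ball y r)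
      (fun y => Metric.isOpen_ball)
      (fun x _ => Set.mem_iUnion.2 ⟨x, Metric.mem_ball_self hr⟩)
  set ε₁ : ℝ := min r (ε₀ / 2) with hε₁def
  have hε₁ : 0 < ε₁ := lt_min hr (by linarith)
  have hε₁r : ε₁ ≤ r := min_le_left _ _
  have hε₁ε₀ : ε₁ < ε₀ := lt_of_le_of_lt (min_le_right _ _) (by linarith)
  set c₁ : ℝ := c * ε₁ ^ (-((n : ℝ) - δ)) * s.card with hc₁def
  -- key pointwise bound
  have key : ∀ lam : ℝ, 1 ≤ lam →
      {a : Fin n → ℝ | a ∈ P ∧ ∃ b ∈ frontier (lam • Ω), dist a b < r}.Finite ∧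
        (∑' a : {a : Fin n → ℝ | a ∈ P ∧ ∃ b ∈ frontier (lam • Ω), dist a b < r},
            |T (a : Fin n → ℝ)|) ≤ c₁ * K * M * lam ^ ((n : ℝ) - δ) := by
    intro lam hlam
    have hlam0 : (0 : ℝ) < lam := lt_of_lt_of_le one_pos hlam
    set ε : ℝ := ε₁ / lam with hεdef
    have hε : 0 < ε := div_pos hε₁ hlam0
    have hεlt : ε < ε₀ := lt_of_le_of_lt (div_le_self hε₁.le hlam) hε₁ε₀
    obtain ⟨F, hFcard, hFcov⟩ := hfr ε hε hεlt
    have hfront : frontier (lam • Ω) = lam • frontier Ω := by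
      have h := (Homeomorph.smulOfNeZero lam hlam0.ne').image_frontier Ω
      have h2 : (Homeomorph.smulOfNeZero lam hlam0.ne') '' Ω = lam • Ω := rfl
      have h3 : (Homeomorph.smulOfNeZero lam hlam0.ne') '' frontier Ω = lam • frontier Ω := rfl
      rw [h2, h3] at h
      exact h.symm
    set S := {a : Fin n → ℝ | a ∈ P ∧ ∃ b ∈ frontier (lam • Ω), dist a b < r} with hSdef
    have hsub : S ⊆ ⋃ q ∈ F, ⋃ y ∈ s, (P ∩ Metric.ball (lam • q + y) r) := by
      rintro a ⟨haP, b, hb, hab⟩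
      rw [hfront] at hb
      obtain ⟨w, hw, rfl⟩ := hb
      obtain ⟨q, hqF, hq⟩ := Set.mem_iUnion₂.1 (hFcov hw)
      have hwq : dist w q < ε := Metric.mem_ball.1 hq
      have hdist1 : dist (lam • w) (lam • q) < ε₁ := by
        rw [dist_smul₀, Real.norm_eq_abs, abs_of_pos hlam0]
        calc lam * dist w q < lam * ε := by
              exact mul_lt_mul_of_pos_left hwq hlam0
          _ = ε₁ := by
              rw [hεdef]; field_simp
      have hdist2 : dist a (lam • q) < 2 * r := by
        calc dist a (lam • q) ≤ dist a (lam • w) + dist (lam • w) (lam • q) := dist_triangle _ _ _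
          _ < r + ε₁ := by exact add_lt_add hab hdist1
          _ ≤ 2 * r := by linarith
      have hmem : a - lam • q ∈ Metric.closedBall (0 : Fin n → ℝ) (2 * r) := by
        rw [Metric.mem_closedBall, dist_zero_right, ← dist_eq_norm]
        exact hdist2.le
      obtain ⟨y, hys, hy⟩ := Set.mem_iUnion₂.1 (hs hmem)
      refine Set.mem_iUnion₂.2 ⟨q, hqF, Set.mem_iUnion₂.2 ⟨y, hys, haP, ?_⟩⟩
      rw [Metric.mem_ball] at hy ⊢
      have : dist a (lam • q + y) = dist (a - lam • q) y := by
        rw [dist_eq_norm, dist_eq_norm]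
        congr 1
        abel
      rw [this]
      exact hy
    have hfinU : (⋃ q ∈ F, ⋃ y ∈ s, (P ∩ Metric.ball (lam • q + y) r)).Finite :=
      Set.Finite.biUnion F.finite_toSet fun q _ =>
        Set.Finite.biUnion s.finite_toSet fun y _ => hPfin _
    have hfin : S.Finite := hfinU.subset hsub
    refine ⟨hfin, ?_⟩
    -- counting bound
    have hcard : S.ncard ≤ F.card * (s.card * K) := by
      have hss : hfin.toFinset ⊆
          F.biUnion (fun q => s.biUnion (fun y => (hPfin (lam • q + y)).toFinset)) := by
        intro a ha
        rw [Set.Finite.mem_toFinset] at ha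
        have h := hsub ha
        simp only [Set.mem_iUnion, Finset.mem_biUnion, Set.Finite.mem_toFinset] at h ⊢
        obtain ⟨q, hq, y, hy, hmem⟩ := h
        exact ⟨q, hq, y, hy, hmem⟩
      have h2 := Finset.card_le_card hss
      have h3 : (F.biUnion (fun q => s.biUnion
          (fun y => (hPfin (lam • q + y)).toFinset))).card ≤ F.card * (s.card * K) := by
        refine le_trans Finset.card_biUnion_le ?_
        refine le_trans (Finset.sum_le_card_nsmul _ _ (s.card * K) ?_) (le_of_eq (smul_eq_mul _ _))
        intro q _
        refine le_trans Finset.card_biUnion_le ?_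
        refine le_trans (Finset.sum_le_card_nsmul _ _ K ?_) (le_of_eq (smul_eq_mul _ _))
        intro y _
        have h4 := hK (lam • q + y)
        rwa [Set.ncard_eq_toFinset_card (P ∩ Metric.ball (lam • q + y) r) (hPfin _)] at h4
      rw [Set.ncard_eq_toFinset_card S hfin]
      exact le_trans h2 h3
    -- sum bound
    haveI : Fintype S := hfin.fintype
    have hsum : (∑' a : S, |T (a : Fin n → ℝ)|) = ∑ a : S, |T (a : Fin n → ℝ)| := tsum_fintype _
    have hcardeq : (Finset.univ : Finset S).card = S.ncard := by
      rw [Finset.card_univ, ← Nat.card_eq_fintype_card, Nat.card_coe_set_eq]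
    have hsum_le : (∑ a : S, |T (a : Fin n → ℝ)|) ≤ (S.ncard : ℝ) * M := by
      have h := Finset.sum_le_card_nsmul Finset.univ (fun a : S => |T (a : Fin n → ℝ)|) M
        (fun a _ => hM a a.2.1)
      rw [hcardeq, nsmul_eq_mul] at h
      exact h
    -- bound on F.card in terms of lam
    have hεpow : ε ^ (-((n : ℝ) - δ)) = ε₁ ^ (-((n : ℝ) - δ)) * lam ^ ((n : ℝ) - δ) := by
      rw [hεdef, Real.div_rpow hε₁.le hlam0.le, Real.rpow_neg hlam0.le, div_eq_mul_inv, inv_inv]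
    have hF' : (F.card : ℝ) ≤ c * ε₁ ^ (-((n : ℝ) - δ)) * lam ^ ((n : ℝ) - δ) := by
      calc (F.card : ℝ) ≤ c * ε ^ (-((n : ℝ) - δ)) := hFcard
        _ = c * ε₁ ^ (-((n : ℝ) - δ)) * lam ^ ((n : ℝ) - δ) := by rw [hεpow]; ring
    rw [hsum]
    have hcardR : (S.ncard : ℝ) ≤ (F.card : ℝ) * ((s.card : ℝ) * K) := by
      have := hcard
      push_cast
      exact_mod_cast Nat.cast_le.2 this
    calc (∑ a : S, |T (a : Fin n → ℝ)|) ≤ (S.ncard : ℝ) * M := hsum_le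
      _ ≤ ((F.card : ℝ) * ((s.card : ℝ) * K)) * M :=
          mul_le_mul_of_nonneg_right hcardR hM0
      _ ≤ ((c * ε₁ ^ (-((n : ℝ) - δ)) * lam ^ ((n : ℝ) - δ)) * ((s.card : ℝ) * K)) * M := by
          refine mul_le_mul_of_nonneg_right (mul_le_mul_of_nonneg_right hF' ?_) hM0
          positivity
      _ = c₁ * K * M * lam ^ ((n : ℝ) - δ) := by rw [hc₁def]; ring
  refine ⟨⟨c₁, key⟩, ?_⟩
  -- the limit statement
  set vΩ : ℝ := (volume Ω).toReal with hvΩdef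
  have hΩfin : volume Ω < ⊤ := by
    obtain ⟨R, hR⟩ := hΩb.subset_closedBall 0
    exact lt_of_le_of_lt (measure_mono hR) (measure_closedBall_lt_top)
  have hvΩ : 0 < vΩ := ENNReal.toReal_pos hΩv.ne' hΩfin.ne
  have hvol : ∀ lam : ℝ, 0 < lam → (volume (lam • Ω)).toReal = lam ^ n * vΩ := by
    intro lam hlam0
    rw [Measure.addHaar_smul volume lam Ω, ENNReal.toReal_mul,
      ENNReal.toReal_ofReal (abs_nonneg _), abs_of_nonneg (by positivity),
      Module.finrank_fin_fun]
  have hbound : ∀ lam : ℝ, 1 ≤ lam →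
      (∑' a : {a : Fin n → ℝ | a ∈ P ∧ ∃ b ∈ frontier (lam • Ω), dist a b < r},
          |T (a : Fin n → ℝ)|) / (volume (lam • Ω)).toReal
        ≤ (c₁ * K * M / vΩ) * lam ^ (-δ) := by
    intro lam hlam
    have hlam0 : (0 : ℝ) < lam := lt_of_lt_of_le one_pos hlam
    have hvolpos : 0 < (volume (lam • Ω)).toReal := by
      rw [hvol lam hlam0]; positivity
    have h1 : lam ^ ((n : ℝ) - δ) = lam ^ (n : ℕ) * lam ^ (-δ) := by
      rw [show ((n : ℝ) - δ) = (n : ℝ) + (-δ) from sub_eq_add_neg _ _,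
        Real.rpow_add hlam0, Real.rpow_natCast]
    calc (∑' a : {a : Fin n → ℝ | a ∈ P ∧ ∃ b ∈ frontier (lam • Ω), dist a b < r},
          |T (a : Fin n → ℝ)|) / (volume (lam • Ω)).toReal
        ≤ (c₁ * K * M * lam ^ ((n : ℝ) - δ)) / (volume (lam • Ω)).toReal := by
          gcongr
          exact (key lam hlam).2
      _ = (c₁ * K * M / vΩ) * lam ^ (-δ) := by
          rw [hvol lam hlam0, h1]
          have h2 : (lam : ℝ) ^ (n : ℕ) ≠ 0 := by positivity
          field_simp
  refine squeeze_zero' (g := fun lam : ℝ => c₁ * K * M / vΩ * lam ^ (-δ)) ?_ ?_ ?_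
  · filter_upwards [eventually_ge_atTop (1 : ℝ)] with lam _
    exact div_nonneg (tsum_nonneg fun i => abs_nonneg _) ENNReal.toReal_nonneg
  · filter_upwards [eventually_ge_atTop (1 : ℝ)] with lam hlam
    exact hbound lam hlam
  · have h := (tendsto_rpow_neg_atTop hδ).const_mul (c₁ * K * M / vΩ)
    simpa using h
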